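/- Let A be semistable with J = lim_{t→∞} e^{At}, and suppose P̃ is any symmetric solution of A P̃ + P̃ Aᵀ + (I−J)BBᵀ(I−Jᵀ) = 0. Then the pseudo controllability Gramian 𝒫 = ∫₀^∞ (e^{At}−J)BBᵀ(e^{Aᵀt}−Jᵀ) dt is finite and equals P̃ − J P̃ Jᵀ. -/

import Mathlib

open Matrix Filter NormedSpace MeasureTheory

section Aux

attribute [local instance] Matrix.linftyOpNormedRing Matrix.linftyOpNormedAlgebra

variable {n p : ℕ}

/-- The continuous linear map extracting the `(i, j)` entry of a matrix. -/
noncomputable def entryCLM (i j : Fin n) : Matrix (Fin n) (Fin n) ℝ →L[ℝ] ℝ :=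
  LinearMap.toContinuousLinearMap
    { toFun := fun M => M i j
      map_add' := fun _ _ => rfl
      map_smul' := fun _ _ => rfl }

private lemma entry_hasDerivAt {g : ℝ → Matrix (Fin n) (Fin n) ℝ}
    {g' : Matrix (Fin n) (Fin n) ℝ} {t : ℝ} (h : HasDerivAt g g' t) (i j : Fin n) :
    HasDerivAt (fun s => g s i j) (g' i j) t :=
  (entryCLM i j).hasFDerivAt.comp_hasDerivAt t h

private lemma expA_entry_cont (A : Matrix (Fin n) (Fin n) ℝ) (i j : Fin n) :
    Continuous fun t : ℝ => exp (t • A) i j :=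
  continuous_iff_continuousAt.2 fun t =>
    (entry_hasDerivAt (hasDerivAt_exp_smul_const' A t) i j).continuousAt

lemma pg_entry_sum (M : Matrix (Fin n) (Fin n) ℝ) (B : Matrix (Fin n) (Fin p) ℝ)
    (i j : Fin n) :
    (M * B * Bᵀ * Mᵀ) i j = ∑ k, (M * B) i k * (M * B) j k := by
  have h : M * B * Bᵀ * Mᵀ = (M * B) * (M * B)ᵀ := by
    rw [Matrix.transpose_mul, Matrix.mul_assoc]
  rw [h, Matrix.mul_apply]
  simp [Matrix.transpose_apply]

lemma integrand_cont (A J : Matrix (Fin n) (Fin n) ℝ) (B : Matrix (Fin n) (Fin p) ℝ)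
    (i j : Fin n) :
    Continuous fun t : ℝ => ((exp (t • A) - J) * B * Bᵀ * (exp (t • A) - J)ᵀ) i j := by
  have hCB : ∀ (i : Fin n) (k : Fin p),
      Continuous fun t : ℝ => ((exp (t • A) - J) * B) i k := by
    intro i k
    simp only [Matrix.mul_apply, Matrix.sub_apply]
    exact continuous_finset_sum _ fun l _ =>
      ((expA_entry_cont A i l).sub continuous_const).mul continuous_const
  simp only [pg_entry_sum]
  exact continuous_finset_sum _ fun k _ => (hCB i k).mul (hCB j k)

lemma pg_interval (A J : Matrix (Fin n) (Fin n) ℝ) (B : Matrix (Fin n) (Fin p) ℝ)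
    (Pt : Matrix (Fin n) (Fin n) ℝ)
    (hJ : ∀ t : ℝ, exp (t • A) * J = J)
    (hPlyap : A * Pt + Pt * Aᵀ + (1 - J) * B * Bᵀ * (1 - Jᵀ) = 0)
    (T : ℝ) (i j : Fin n) :
    ∫ t in (0:ℝ)..T, ((exp (t • A) - J) * B * Bᵀ * (exp (t • A) - J)ᵀ) i j
      = (Pt - exp (T • A) * Pt * (exp (T • A))ᵀ) i j := by
  obtain ⟨f, hf⟩ : ∃ f : ℝ → Matrix (Fin n) (Fin n) ℝ, f = fun t => exp (t • A) :=
    ⟨_, rfl⟩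
  have hfa : ∀ t : ℝ, exp (t • A) = f t := fun t => by rw [hf]
  simp only [hfa]
  have hJ' : ∀ t : ℝ, f t * J = J := fun t => by rw [hf]; exact hJ t
  have hlyap' : A * Pt + Pt * Aᵀ = -((1 - J) * B * Bᵀ * (1 - Jᵀ)) :=
    eq_neg_of_add_eq_zero_left hPlyap
  have hderiv : ∀ t : ℝ, HasDerivAt (fun t => (f t * Pt * (f t)ᵀ) i j)
      (-(((f t - J) * B * Bᵀ * (f t - J)ᵀ) i j)) t := by
    intro t
    have h1 : HasDerivAt f (A * f t) t := by
      rw [hf]; exact hasDerivAt_exp_smul_const' A t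
    have h2 : HasDerivAt (fun s => (f s)ᵀ) ((f t)ᵀ * Aᵀ) t := by
      rw [hf]
      have htr : ∀ s : ℝ, (exp (s • A))ᵀ = exp (s • Aᵀ) := fun s => by
        rw [← Matrix.exp_transpose, Matrix.transpose_smul]
      simp only [htr]
      exact hasDerivAt_exp_smul_const Aᵀ t
    have h3 := (h1.mul_const Pt).mul h2
    have heq : A * f t * Pt * (f t)ᵀ + (f t * Pt) * ((f t)ᵀ * Aᵀ)
        = -((f t - J) * B * Bᵀ * (f t - J)ᵀ) := by
      have hc : A * f t = f t * A := by
        rw [hf]; exact ((Commute.refl A).smul_right t).exp_right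
      have hc2 : (f t)ᵀ * Aᵀ = Aᵀ * (f t)ᵀ := by
        rw [← Matrix.transpose_mul, ← Matrix.transpose_mul, hc]
      have h4 : f t * (1 - J) = f t - J := by rw [mul_sub, mul_one, hJ']
      have h5 : (1 - Jᵀ) * (f t)ᵀ = (f t - J)ᵀ := by
        rw [sub_mul, one_mul, Matrix.transpose_sub, ← Matrix.transpose_mul, hJ']
      calc A * f t * Pt * (f t)ᵀ + (f t * Pt) * ((f t)ᵀ * Aᵀ)
          = f t * (A * Pt + Pt * Aᵀ) * (f t)ᵀ := by
            rw [hc, hc2]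
            simp only [Matrix.mul_add, Matrix.add_mul, Matrix.mul_assoc]
        _ = -((f t * (1 - J)) * B * Bᵀ * ((1 - Jᵀ) * (f t)ᵀ)) := by
            rw [hlyap', mul_neg, neg_mul]
            congr 1
            simp only [Matrix.mul_assoc]
        _ = -((f t - J) * B * Bᵀ * (f t - J)ᵀ) := by rw [h4, h5]
    rw [heq] at h3
    exact entry_hasDerivAt h3 i j
  have hint : IntervalIntegrable
      (fun t => -(((f t - J) * B * Bᵀ * (f t - J)ᵀ) i j)) volume 0 T := by
    simp only [hf]
    exact ((integrand_cont A J B i j).neg).intervalIntegrable _ _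
  have hftc := intervalIntegral.integral_eq_sub_of_hasDerivAt
    (f := fun t => (f t * Pt * (f t)ᵀ) i j) (fun t _ => hderiv t) hint
  rw [intervalIntegral.integral_neg] at hftc
  have h0 : (f 0 * Pt * (f 0)ᵀ) i j = Pt i j := by
    rw [hf]
    simp
  rw [Matrix.sub_apply, ← h0]
  linarith [hftc]

end Aux

/-- For a semistable matrix `A` with limit `J = lim e^{At}`, and any symmetric solution `P̃`
of the Lyapunov equation `A P̃ + P̃ Aᵀ + (I−J)BBᵀ(I−Jᵀ) = 0`, the pseudo controllability
Gramian `𝒫 = ∫₀^∞ (e^{At}−J)BBᵀ(e^{Aᵀt}−Jᵀ) dt` is finite (entrywise integrable) and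
equals `P̃ − J P̃ Jᵀ`. -/
theorem pseudo_gramian_eq {n p : ℕ}
    (A J : Matrix (Fin n) (Fin n) ℝ) (B : Matrix (Fin n) (Fin p) ℝ)
    (hlim : Tendsto (fun t : ℝ => exp (t • A)) atTop (nhds J))
    (Pt : Matrix (Fin n) (Fin n) ℝ)
    (hPsym : Ptᵀ = Pt)
    (hPlyap : A * Pt + Pt * Aᵀ + (1 - J) * B * Bᵀ * (1 - Jᵀ) = 0) :
    (∀ i j, IntegrableOn
        (fun t : ℝ => ((exp (t • A) - J) * B * Bᵀ * (exp (t • A) - J)ᵀ) i j)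
        (Set.Ioi 0)) ∧
    (∀ i j, (∫ t in Set.Ioi (0 : ℝ),
        ((exp (t • A) - J) * B * Bᵀ * (exp (t • A) - J)ᵀ) i j)
      = (Pt - J * Pt * Jᵀ) i j) := by
  -- the limit `J` absorbs the semigroup: `e^{tA} J = J`
  have hJ : ∀ t : ℝ, exp (t • A) * J = J := by
    intro t
    have h1 : Tendsto (fun s : ℝ => exp ((t + s) • A)) atTop (nhds J) :=
      hlim.comp (tendsto_atTop_add_const_left atTop t tendsto_id)
    have h2 : Tendsto (fun s : ℝ => exp (t • A) * exp (s • A)) atTop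
        (nhds (exp (t • A) * J)) := by
      have hc : Continuous fun M : Matrix (Fin n) (Fin n) ℝ => exp (t • A) * M :=
        continuous_const.matrix_mul continuous_id
      exact (hc.tendsto J).comp hlim
    have h3 : (fun s : ℝ => exp ((t + s) • A))
        = fun s : ℝ => exp (t • A) * exp (s • A) := by
      funext s
      rw [add_smul]
      exact Matrix.exp_add_of_commute _ _ (((Commute.refl A).smul_left t).smul_right s)
    rw [h3] at h1
    exact tendsto_nhds_unique h2 h1
  -- entrywise convergence of `Pt - e^{TA} Pt e^{TAᵀ}`
  have hGlim : Tendsto (fun T : ℝ => Pt - exp (T • A) * Pt * (exp (T • A))ᵀ)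
      atTop (nhds (Pt - J * Pt * Jᵀ)) := by
    have hc : Continuous fun M : Matrix (Fin n) (Fin n) ℝ => Pt - M * Pt * Mᵀ :=
      continuous_const.sub ((continuous_id.matrix_mul continuous_const).matrix_mul
        continuous_id.matrix_transpose)
    exact (hc.tendsto J).comp hlim
  have hGlim' : ∀ i j, Tendsto
      (fun T : ℝ => (Pt - exp (T • A) * Pt * (exp (T • A))ᵀ) i j)
      atTop (nhds ((Pt - J * Pt * Jᵀ) i j)) := fun i j =>
    ((continuous_id.matrix_elem i j).tendsto _).comp hGlim
  -- nonnegativity of diagonal entries of the integrand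
  have hnonneg : ∀ (t : ℝ) (i : Fin n),
      0 ≤ ((exp (t • A) - J) * B * Bᵀ * (exp (t • A) - J)ᵀ) i i := by
    intro t i
    rw [pg_entry_sum]
    exact Finset.sum_nonneg fun k _ => mul_self_nonneg _
  -- integrability of diagonal entries
  have hii : ∀ i : Fin n, IntegrableOn
      (fun t : ℝ => ((exp (t • A) - J) * B * Bᵀ * (exp (t • A) - J)ᵀ) i i)
      (Set.Ioi 0) := by
    intro i
    refine integrableOn_Ioi_of_intervalIntegral_norm_tendsto
      ((Pt - J * Pt * Jᵀ) i i) 0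
      (fun T => (integrand_cont A J B i i).integrableOn_Ioc) tendsto_id ?_
    have habs : ∀ t : ℝ,
        ‖((exp (t • A) - J) * B * Bᵀ * (exp (t • A) - J)ᵀ) i i‖
          = ((exp (t • A) - J) * B * Bᵀ * (exp (t • A) - J)ᵀ) i i :=
      fun t => Real.norm_of_nonneg (hnonneg t i)
    simp only [id_eq, habs, pg_interval A J B Pt hJ hPlyap]
    exact hGlim' i i
  -- integrability of all entries, by domination
  have hFint : ∀ i j, IntegrableOn
      (fun t : ℝ => ((exp (t • A) - J) * B * Bᵀ * (exp (t • A) - J)ᵀ) i j)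
      (Set.Ioi 0) := by
    intro i j
    have hdom : IntegrableOn
        (fun t : ℝ => (((exp (t • A) - J) * B * Bᵀ * (exp (t • A) - J)ᵀ) i i
          + ((exp (t • A) - J) * B * Bᵀ * (exp (t • A) - J)ᵀ) j j) / 2)
        (Set.Ioi 0) := ((hii i).add (hii j)).div_const 2
    refine hdom.mono' ((integrand_cont A J B i j).aestronglyMeasurable) ?_
    filter_upwards with t
    rw [Real.norm_eq_abs, pg_entry_sum, pg_entry_sum, pg_entry_sum]
    calc |∑ k, ((exp (t • A) - J) * B) i k * ((exp (t • A) - J) * B) j k|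
        ≤ ∑ k, |((exp (t • A) - J) * B) i k * ((exp (t • A) - J) * B) j k| :=
          Finset.abs_sum_le_sum_abs _ _
      _ ≤ ∑ k, (((exp (t • A) - J) * B) i k * ((exp (t • A) - J) * B) i k
            + ((exp (t • A) - J) * B) j k * ((exp (t • A) - J) * B) j k) / 2 := by
          refine Finset.sum_le_sum fun k _ => ?_
          set a := ((exp (t • A) - J) * B) i k
          set b := ((exp (t • A) - J) * B) j k
          rcases abs_cases (a * b) with ⟨h, _⟩ | ⟨h, _⟩ <;> rw [h] <;>
            nlinarith [sq_nonneg (a - b), sq_nonneg (a + b)]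
      _ = (∑ k, ((exp (t • A) - J) * B) i k * ((exp (t • A) - J) * B) i k
            + ∑ k, ((exp (t • A) - J) * B) j k * ((exp (t • A) - J) * B) j k) / 2 := by
          rw [← Finset.sum_add_distrib, ← Finset.sum_div]
  refine ⟨hFint, fun i j => ?_⟩
  have h1 := intervalIntegral_tendsto_integral_Ioi 0 (hFint i j) tendsto_id
  have h2 : Tendsto
      (fun T : ℝ => ∫ t in (0:ℝ)..T,
        ((exp (t • A) - J) * B * Bᵀ * (exp (t • A) - J)ᵀ) i j)
      atTop (nhds ((Pt - J * Pt * Jᵀ) i j)) := by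
    simp only [pg_interval A J B Pt hJ hPlyap]
    exact hGlim' i j
  exact tendsto_nhds_unique h1 h2
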